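/- Let α ∈ ℝ with −1 < α < 0 and set d := 5. Let p ≥ 1 and l ∈ ℕ satisfy l ≥ p − 1, and suppose that p > 1 or l > 0. Let β₁, …, β_p be nonzero multi-indices with [β_i] ≥ −1 for all i, and set β := β₁ + ⋯ + β_p + l·δ_g. Then for every k ∈ {1, …, p}: [β_k] ≤ [β] and |β_k|_≺ < |β|_≺. -/

import Mathlib

/-- Multi-indices: finitely supported functions from `{g} ⊔ ℕ⁴` to `ℕ`. -/
abbrev MIdx : Type := (Unit ⊕ (Fin 4 → ℕ)) →₀ ℕ

/-- Parabolic degree of an element of `ℕ⁴`: `|n| = 2n₀ + n₁ + n₂ + n₃`. -/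
def pdeg (n : Fin 4 → ℕ) : ℕ := 2 * n 0 + n 1 + n 2 + n 3

/-- The homogeneity `|β| = (α+1)β(g) + Σ_{n∈ℕ⁴} β(n)(|n| − α) + α` of a multi-index. -/
noncomputable def homog (α : ℝ) (β : MIdx) : ℝ :=
  (α + 1) * (β (Sum.inl ()) : ℝ) +
    (β.sum fun k m =>
      match k with
      | Sum.inl _ => (0 : ℝ)
      | Sum.inr n => (m : ℝ) * ((pdeg n : ℝ) - α)) + α

/-- `[β] = β(g) − Σ_{n∈ℕ⁴} β(n)`. -/
def brk (β : MIdx) : ℤ :=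
  (β (Sum.inl ()) : ℤ) -
    (β.sum fun k m =>
      match k with
      | Sum.inl _ => (0 : ℤ)
      | Sum.inr _ => (m : ℤ))

/-- The modified homogeneity `|β|_≺ = |β| + (d/2)([β] + 1)` with `d = 5`. -/
noncomputable def homP (α : ℝ) (β : MIdx) : ℝ :=
  homog α β + (5 / 2 : ℝ) * ((brk β : ℝ) + 1)

/-- The multi-index `δ_g`. -/
noncomputable def deltaG : MIdx := Finsupp.single (Sum.inl ()) 1

/-! Auxiliary machinery -/

noncomputable def Tval (β : MIdx) : ℝ :=
  β.sum fun k m => match k with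
    | Sum.inl _ => (0 : ℝ)
    | Sum.inr n => (m : ℝ) * (pdeg n : ℝ)

def scv (β : MIdx) : ℤ :=
  β.sum fun k m => match k with
    | Sum.inl _ => (0 : ℤ)
    | Sum.inr _ => (m : ℤ)

lemma brk_rep (β : MIdx) : brk β = (β (Sum.inl ()) : ℤ) - scv β := rfl

lemma Tval_nonneg (β : MIdx) : 0 ≤ Tval β := by
  apply Finset.sum_nonneg
  intro k _
  rcases k with _ | n <;> simp <;> positivity

lemma Tval_add (β₁ β₂ : MIdx) : Tval (β₁ + β₂) = Tval β₁ + Tval β₂ := by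
  unfold Tval
  refine Finsupp.sum_add_index' (fun k => ?_) (fun k m₁ m₂ => ?_)
  · rcases k with _ | n <;> simp
  · rcases k with _ | n
    · simp
    · show ((m₁ + m₂ : ℕ) : ℝ) * (pdeg n : ℝ) = (m₁ : ℝ) * _ + (m₂ : ℝ) * _
      push_cast; ring

lemma scv_add (β₁ β₂ : MIdx) : scv (β₁ + β₂) = scv β₁ + scv β₂ := by
  unfold scv
  refine Finsupp.sum_add_index' (fun k => ?_) (fun k m₁ m₂ => ?_)
  · rcases k with _ | n <;> simp
  · rcases k with _ | n
    · simp
    · show ((m₁ + m₂ : ℕ) : ℤ) = (m₁ : ℤ) + (m₂ : ℤ)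
      push_cast; ring

lemma brk_add (β₁ β₂ : MIdx) : brk (β₁ + β₂) = brk β₁ + brk β₂ := by
  simp only [brk_rep, scv_add, Finsupp.add_apply]
  push_cast; ring

lemma homog_rep (α : ℝ) (β : MIdx) :
    homog α β = (α + 1) * (β (Sum.inl ()) : ℝ) + Tval β - α * (scv β : ℝ) + α := by
  have h1 : (β.sum fun k m =>
      match k with
      | Sum.inl _ => (0 : ℝ)
      | Sum.inr n => (m : ℝ) * ((pdeg n : ℝ) - α))
      = Tval β - α * (scv β : ℝ) := by
    unfold Tval scv
    rw [Finsupp.sum, Finsupp.sum, Finsupp.sum, Int.cast_sum, Finset.mul_sum,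
      ← Finset.sum_sub_distrib]
    refine Finset.sum_congr rfl fun k _ => ?_
    rcases k with _ | n
    · simp
    · show (↑(β (Sum.inr n)) : ℝ) * ((pdeg n : ℝ) - α)
        = (↑(β (Sum.inr n)) : ℝ) * (pdeg n : ℝ) - α * ((↑(β (Sum.inr n)) : ℤ) : ℝ)
      push_cast; ring
  rw [homog, h1]; ring

noncomputable def GG (α : ℝ) (β : MIdx) : ℝ :=
  (β (Sum.inl ()) : ℝ) + Tval β + (α + 5 / 2) * (brk β : ℝ)

lemma homP_rep (α : ℝ) (β : MIdx) : homP α β = GG α β + (α + 5 / 2) := by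
  rw [homP, homog_rep, GG, brk_rep]
  push_cast; ring

noncomputable def GGh (α : ℝ) : MIdx →+ ℝ where
  toFun := GG α
  map_zero' := by simp [GG, Tval, brk]
  map_add' β₁ β₂ := by
    simp only [GG, Tval_add, brk_add, Finsupp.add_apply]
    push_cast; ring

def brkHom : MIdx →+ ℤ where
  toFun := brk
  map_zero' := by simp [brk]
  map_add' := brk_add

lemma brk_deltaG : brk deltaG = 1 := by
  rw [brk_rep, deltaG]
  rw [show scv (Finsupp.single (Sum.inl ()) 1) = 0 from
      Finsupp.sum_single_index (by simp)]
  simp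

lemma Tval_deltaG : Tval deltaG = 0 := by
  rw [Tval, deltaG]
  exact Finsupp.sum_single_index (by simp)

lemma GG_deltaG (α : ℝ) : GG α deltaG = α + 7 / 2 := by
  rw [GG, brk_deltaG, Tval_deltaG, deltaG]
  simp; ring

lemma GG_lb (α : ℝ) (hα₁ : -1 < α) (β : MIdx) (h : -1 ≤ brk β) :
    -(α + 5 / 2) ≤ GG α β := by
  have h1 : (-1 : ℝ) ≤ (brk β : ℝ) := by exact_mod_cast h
  have h2 : (0 : ℝ) ≤ (β (Sum.inl ()) : ℝ) := Nat.cast_nonneg _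
  have h3 := Tval_nonneg β
  rw [GG]
  nlinarith

theorem modified_homogeneity_strict_decrease (α : ℝ) (hα₁ : -1 < α) (hα₂ : α < 0)
    (p l : ℕ) (hp : 1 ≤ p) (hl : (p : ℤ) - 1 ≤ (l : ℤ)) (hpl : 1 < p ∨ 0 < l)
    (βs : Fin p → MIdx) (hne : ∀ i, βs i ≠ 0) (hbrk : ∀ i, -1 ≤ brk (βs i)) :
    ∀ k : Fin p,
      brk (βs k) ≤ brk ((∑ j, βs j) + l • deltaG) ∧
      homP α (βs k) < homP α ((∑ j, βs j) + l • deltaG) := by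
  intro k
  have hα52 : (0 : ℝ) < α + 5 / 2 := by linarith
  have hl1 : 1 ≤ l := by rcases hpl with h | h <;> omega
  have hcard : (Finset.univ.erase k).card = p - 1 := by
    rw [Finset.card_erase_of_mem (Finset.mem_univ k), Finset.card_univ, Fintype.card_fin]
  have hcardZ : ((Finset.univ.erase k).card : ℤ) = (p : ℤ) - 1 := by
    rw [hcard]; omega
  have hcardR : ((Finset.univ.erase k).card : ℝ) = (p : ℝ) - 1 := by
    rw [hcard]
    have : (1:ℕ) ≤ p := hp
    push_cast [Nat.cast_sub this]
    ring
  constructor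
  · -- brk part
    have hB : brk ((∑ j, βs j) + l • deltaG)
        = (∑ j, brk (βs j)) + (l : ℤ) := by
      have h1 : brk ((∑ j, βs j) + l • deltaG)
          = brk (∑ j, βs j) + brk (l • deltaG) := brkHom.map_add _ _
      have h2 : brk (∑ j, βs j) = ∑ j, brk (βs j) := map_sum brkHom βs Finset.univ
      have h3 : brk (l • deltaG) = (l : ℤ) := by
        have := brkHom.map_nsmul l deltaG
        simp only [brkHom, AddMonoidHom.coe_mk, ZeroHom.coe_mk] at this ⊢
        rw [this, brk_deltaG, nsmul_eq_mul, mul_one]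
      rw [h1, h2, h3]
    have hsplit : (∑ j, brk (βs j))
        = brk (βs k) + ∑ j ∈ Finset.univ.erase k, brk (βs j) :=
      (Finset.add_sum_erase _ _ (Finset.mem_univ k)).symm
    have hlow : ((Finset.univ.erase k).card : ℤ) • (-1 : ℤ)
        ≤ ∑ j ∈ Finset.univ.erase k, brk (βs j) := by
      have : (Finset.univ.erase k).card • (-1 : ℤ)
          ≤ ∑ j ∈ Finset.univ.erase k, brk (βs j) :=
        Finset.card_nsmul_le_sum _ _ _ (fun j _ => hbrk j)
      simpa using this
    rw [hB, hsplit]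
    rw [hcardZ] at hlow
    simp only [smul_eq_mul] at hlow
    linarith
  · -- homP part
    have hB : GG α ((∑ j, βs j) + l • deltaG)
        = (∑ j, GG α (βs j)) + (l : ℝ) * (α + 7 / 2) := by
      have h1 : GG α ((∑ j, βs j) + l • deltaG)
          = GG α (∑ j, βs j) + GG α (l • deltaG) := (GGh α).map_add _ _
      have h2 : GG α (∑ j, βs j) = ∑ j, GG α (βs j) := map_sum (GGh α) βs Finset.univ
      have h3 : GG α (l • deltaG) = (l : ℝ) * (α + 7 / 2) := by
        have := (GGh α).map_nsmul l deltaG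
        simp only [GGh, AddMonoidHom.coe_mk, ZeroHom.coe_mk] at this
        rw [this, GG_deltaG, nsmul_eq_mul]
      rw [h1, h2, h3]
    have hsplit : (∑ j, GG α (βs j))
        = GG α (βs k) + ∑ j ∈ Finset.univ.erase k, GG α (βs j) :=
      (Finset.add_sum_erase _ _ (Finset.mem_univ k)).symm
    have hlow : ((Finset.univ.erase k).card : ℝ) * (-(α + 5/2))
        ≤ ∑ j ∈ Finset.univ.erase k, GG α (βs j) := by
      have h := Finset.card_nsmul_le_sum (Finset.univ.erase k) (fun j => GG α (βs j))
        (-(α + 5/2)) (fun j _ => GG_lb α hα₁ (βs j) (hbrk j))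
      rwa [nsmul_eq_mul] at h
    rw [homP_rep, homP_rep, hB, hsplit]
    rw [hcardR] at hlow
    have hlR : (p : ℝ) - 1 ≤ (l : ℝ) := by exact_mod_cast hl
    have hl1R : (1 : ℝ) ≤ (l : ℝ) := by exact_mod_cast hl1
    nlinarith [mul_nonneg (sub_nonneg.mpr hlR) hα52.le]
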